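/- arXiv:2310.18898 — 3 statements merged into one kernel-verified Lean document; each statement's English description precedes it below -/
import Mathlib

section
/- Let 0 < d < 1, k ≥ 1, t ≥ 0, and c ∈ (0,1). Suppose κ ∈ (0,1) has density proportional to κ^{d+k/2−1}(1−κ+κc)^{−d−1} exp(−κt/2). Then for c sufficiently small (depending only on d, k), E[1−κ] ≤ K c^{d} e^{t/2} for a constant K depending only on d and k. -/
open MeasureTheory Set

set_option maxHeartbeats 1000000

/-- Lemma 4: under the Exponential-Inverse-Gamma posterior (unnormalized density
`κ^{d+k/2-1}(1-κ+κc)^{-d-1} e^{-κt/2}` on `(0,1)`), for `c` small enough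
`E[1-κ] ≤ K c^d e^{t/2}` with `K` depending only on `d` and `k`. -/
theorem EIG_posterior_one_sub_kappa_bound
    (d : ℝ) (k : ℕ) (hd0 : 0 < d) (hd1 : d < 1) (hk : 1 ≤ k) :
    ∃ K : ℝ, 0 < K ∧ ∃ c₀ ∈ Ioo (0:ℝ) 1, ∀ c : ℝ, 0 < c → c ≤ c₀ → ∀ t : ℝ, 0 ≤ t →
      (∫ κ in Ioo (0:ℝ) 1,
          (1 - κ) * (κ ^ (d + (k : ℝ) / 2 - 1) * (1 - κ + κ * c) ^ (-d - 1) *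
            Real.exp (-κ * t / 2))) /
        (∫ κ in Ioo (0:ℝ) 1,
          κ ^ (d + (k : ℝ) / 2 - 1) * (1 - κ + κ * c) ^ (-d - 1) *
            Real.exp (-κ * t / 2))
      ≤ K * c ^ d * Real.exp (t / 2) := by
  have hk' : (1:ℝ) ≤ (k:ℝ) := by exact_mod_cast hk
  set e : ℝ := d + (k : ℝ) / 2 - 1 with he_def
  have he : -1 < e := by simp only [he_def]; linarith
  -- constants
  set M : ℝ := (1/2:ℝ) ^ (-d) + max 1 ((1/2:ℝ) ^ e) with hM_def
  have hM_pos : 0 < M := by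
    rw [hM_def]
    have := Real.rpow_pos_of_pos (by norm_num : (0:ℝ) < 1/2) (-d)
    have h2 : (1:ℝ) ≤ max 1 ((1/2:ℝ) ^ e) := le_max_left _ _
    linarith
  set m : ℝ := min 1 ((1/2:ℝ) ^ e) with hm_def
  have hm_pos : 0 < m :=
    lt_min one_pos (Real.rpow_pos_of_pos (by norm_num) e)
  -- integrability of the dominating function
  have h1int : IntegrableOn (fun x : ℝ => x ^ e) (Ioo (0:ℝ) 1) volume :=
    (intervalIntegral.integrableOn_Ioo_rpow_iff one_pos).2 he
  have h2int : IntegrableOn (fun x : ℝ => (1 - x) ^ (-d)) (Ioo (0:ℝ) 1) volume := by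
    have h0 : IntervalIntegrable (fun x : ℝ => x ^ (-d)) volume 0 1 :=
      intervalIntegral.intervalIntegrable_rpow' (by linarith)
    have h2 := h0.comp_sub_left 1
    norm_num at h2
    replace h2 := h2.symm
    rwa [intervalIntegrable_iff_integrableOn_Ioo_of_le zero_le_one] at h2
  have hMhint : IntegrableOn (fun x : ℝ => M * (x ^ e + (1 - x) ^ (-d)))
      (Ioo (0:ℝ) 1) volume := (h1int.add h2int).const_mul M
  set C₁ : ℝ := ∫ x in Ioo (0:ℝ) 1, M * (x ^ e + (1 - x) ^ (-d)) with hC₁_def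
  have hC₁_nonneg : 0 ≤ C₁ := by
    apply setIntegral_nonneg measurableSet_Ioo
    intro x hx
    have := Real.rpow_nonneg hx.1.le e
    have := Real.rpow_nonneg (by linarith [hx.2] : (0:ℝ) ≤ 1 - x) (-d)
    positivity
  set X : ℝ := m * (2:ℝ) ^ (-d - 1) with hX_def
  have hX_pos : 0 < X := mul_pos hm_pos (Real.rpow_pos_of_pos two_pos _)
  refine ⟨C₁ / X + 1, by positivity, 1/2, by norm_num, ?_⟩
  intro c hc hc2 t ht
  have hc1 : c < 1 := lt_of_le_of_lt hc2 (by norm_num)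
  -- notation for the integrands
  set f : ℝ → ℝ := fun κ =>
    κ ^ e * (1 - κ + κ * c) ^ (-d - 1) * Real.exp (-κ * t / 2) with hf_def
  -- basic facts on (0,1)
  have hbase : ∀ κ ∈ Ioo (0:ℝ) 1, 0 < 1 - κ + κ * c := by
    intro κ hκ
    nlinarith [hκ.1, hκ.2, mul_pos hκ.1 hc]
  have hf_nonneg : ∀ κ ∈ Ioo (0:ℝ) 1, 0 ≤ f κ := by
    intro κ hκ
    have h1 := Real.rpow_nonneg hκ.1.le e
    have h2 := Real.rpow_nonneg (hbase κ hκ).le (-d - 1)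
    have h3 := (Real.exp_pos (-κ * t / 2)).le
    positivity
  have hf_meas : Measurable f := by
    refine Measurable.mul (Measurable.mul ?_ ?_) ?_
    · exact measurable_id.pow measurable_const
    · exact ((measurable_const.sub measurable_id).add
        (measurable_id.mul_const c)).pow measurable_const
    · exact Real.measurable_exp.comp ((measurable_id.neg.mul_const t).div_const 2)
  -- numerator pointwise bound
  have hnum_le : ∀ κ ∈ Ioo (0:ℝ) 1,
      (1 - κ) * f κ ≤ M * (κ ^ e + (1 - κ) ^ (-d)) := by
    intro κ hκ
    obtain ⟨h0, h1⟩ := hκ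
    have h1κ : 0 < 1 - κ := by linarith
    have hb := hbase κ ⟨h0, h1⟩
    have hκe : 0 ≤ κ ^ e := Real.rpow_nonneg h0.le e
    have h1d1 : 0 ≤ (1 - κ) ^ (-d - 1) := Real.rpow_nonneg h1κ.le _
    have h1d : 0 ≤ (1 - κ) ^ (-d) := Real.rpow_nonneg h1κ.le _
    have hexp : Real.exp (-κ * t / 2) ≤ 1 :=
      Real.exp_le_one_iff.2 (by nlinarith)
    have hpow : (1 - κ + κ * c) ^ (-d - 1) ≤ (1 - κ) ^ (-d - 1) :=
      Real.rpow_le_rpow_of_nonpos h1κ (by nlinarith [mul_pos h0 hc]) (by linarith)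
    have hid : (1 - κ) * (1 - κ) ^ (-d - 1) = (1 - κ) ^ (-d) := by
      have h := Real.rpow_add h1κ 1 (-d - 1)
      rw [Real.rpow_one] at h
      rw [← h]; norm_num
    have step : (1 - κ) * f κ ≤ κ ^ e * (1 - κ) ^ (-d) := by
      have hmain : f κ ≤ κ ^ e * (1 - κ) ^ (-d - 1) := by
        calc f κ ≤ κ ^ e * (1 - κ) ^ (-d - 1) * 1 := by
              apply mul_le_mul (mul_le_mul_of_nonneg_left hpow hκe) hexp
                (Real.exp_pos _).le (mul_nonneg hκe h1d1)
          _ = κ ^ e * (1 - κ) ^ (-d - 1) := mul_one _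
      calc (1 - κ) * f κ ≤ (1 - κ) * (κ ^ e * (1 - κ) ^ (-d - 1)) :=
            mul_le_mul_of_nonneg_left hmain h1κ.le
        _ = κ ^ e * ((1 - κ) * (1 - κ) ^ (-d - 1)) := by ring
        _ = κ ^ e * (1 - κ) ^ (-d) := by rw [hid]
    refine step.trans ?_
    rcases le_total κ (1/2) with hhalf | hhalf
    · have hub : (1 - κ) ^ (-d) ≤ (1/2:ℝ) ^ (-d) :=
        Real.rpow_le_rpow_of_nonpos (by norm_num) (by linarith) (by linarith)
      have hM1 : (1/2:ℝ) ^ (-d) ≤ M := by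
        rw [hM_def]
        have : (1:ℝ) ≤ max 1 ((1/2:ℝ) ^ e) := le_max_left _ _
        linarith
      calc κ ^ e * (1 - κ) ^ (-d) ≤ κ ^ e * (1/2:ℝ) ^ (-d) :=
            mul_le_mul_of_nonneg_left hub hκe
        _ = (1/2:ℝ) ^ (-d) * κ ^ e := by ring
        _ ≤ M * κ ^ e := mul_le_mul_of_nonneg_right hM1 hκe
        _ ≤ M * (κ ^ e + (1 - κ) ^ (-d)) :=
            mul_le_mul_of_nonneg_left (le_add_of_nonneg_right h1d) hM_pos.le
    · have hub : κ ^ e ≤ max 1 ((1/2:ℝ) ^ e) := by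
        rcases le_total 0 e with hee | hee
        · have : κ ^ e ≤ (1:ℝ) ^ e := Real.rpow_le_rpow h0.le h1.le hee
          rw [Real.one_rpow] at this
          exact this.trans (le_max_left _ _)
        · have : κ ^ e ≤ (1/2:ℝ) ^ e :=
            Real.rpow_le_rpow_of_nonpos (by norm_num) hhalf hee
          exact this.trans (le_max_right _ _)
      have hM2 : max 1 ((1/2:ℝ) ^ e) ≤ M := by
        rw [hM_def]
        have := Real.rpow_pos_of_pos (by norm_num : (0:ℝ) < 1/2) (-d)
        linarith
      calc κ ^ e * (1 - κ) ^ (-d) ≤ max 1 ((1/2:ℝ) ^ e) * (1 - κ) ^ (-d) :=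
            mul_le_mul_of_nonneg_right hub h1d
        _ ≤ M * (1 - κ) ^ (-d) := mul_le_mul_of_nonneg_right hM2 h1d
        _ ≤ M * (κ ^ e + (1 - κ) ^ (-d)) :=
            mul_le_mul_of_nonneg_left (le_add_of_nonneg_left hκe) hM_pos.le
  -- numerator is integrable and bounded by C₁
  have hnum_nonneg : ∀ κ ∈ Ioo (0:ℝ) 1, 0 ≤ (1 - κ) * f κ := by
    intro κ hκ
    exact mul_nonneg (by linarith [hκ.2]) (hf_nonneg κ hκ)
  have hnum_int : IntegrableOn (fun κ => (1 - κ) * f κ) (Ioo (0:ℝ) 1) volume := by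
    apply Integrable.mono' hMhint
      (((measurable_const.sub measurable_id).mul hf_meas).aestronglyMeasurable)
    refine (ae_restrict_iff' measurableSet_Ioo).2 (Filter.Eventually.of_forall ?_)
    intro κ hκ
    simp only [Pi.mul_apply, Pi.sub_apply, id_eq]
    rw [Real.norm_eq_abs, abs_of_nonneg (hnum_nonneg κ hκ)]
    exact hnum_le κ hκ
  have hNum_le : (∫ κ in Ioo (0:ℝ) 1, (1 - κ) * f κ) ≤ C₁ :=
    setIntegral_mono_on hnum_int hMhint measurableSet_Ioo hnum_le
  -- denominator is integrable
  have hf_int : IntegrableOn f (Ioo (0:ℝ) 1) volume := by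
    apply Integrable.mono' (h1int.const_mul (c ^ (-d - 1)))
      hf_meas.aestronglyMeasurable
    refine (ae_restrict_iff' measurableSet_Ioo).2 (Filter.Eventually.of_forall ?_)
    intro κ hκ
    rw [Real.norm_eq_abs, abs_of_nonneg (hf_nonneg κ hκ)]
    have hκe : 0 ≤ κ ^ e := Real.rpow_nonneg hκ.1.le e
    have hpow : (1 - κ + κ * c) ^ (-d - 1) ≤ c ^ (-d - 1) := by
      apply Real.rpow_le_rpow_of_nonpos hc ?_ (by linarith)
      nlinarith [hκ.1, hκ.2]
    calc f κ ≤ κ ^ e * c ^ (-d - 1) * 1 := by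
          apply mul_le_mul (mul_le_mul_of_nonneg_left hpow hκe)
            (Real.exp_le_one_iff.2 (by nlinarith [hκ.1])) (Real.exp_pos _).le
            (mul_nonneg hκe (Real.rpow_nonneg hc.le _))
      _ = c ^ (-d - 1) * κ ^ e := by ring
  -- lower bound for the denominator
  set L : ℝ := m * (2 * c) ^ (-d - 1) * Real.exp (-t / 2) with hL_def
  have hL_pos : 0 < L :=
    mul_pos (mul_pos hm_pos (Real.rpow_pos_of_pos (by linarith) _)) (Real.exp_pos _)
  have hsub : Ioo (1 - c) 1 ⊆ Ioo (0:ℝ) 1 := Ioo_subset_Ioo (by linarith) le_rfl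
  have hlow : ∀ κ ∈ Ioo (1 - c) 1, L ≤ f κ := by
    intro κ hκ
    have hκ0 : (1/2:ℝ) ≤ κ := by
      have := hκ.1; linarith
    have hκpos : 0 < κ := by linarith
    have hκ1 : κ < 1 := hκ.2
    have hb : 0 < 1 - κ + κ * c := hbase κ ⟨hκpos, hκ1⟩
    have hm1 : m ≤ κ ^ e := by
      rcases le_total 0 e with hee | hee
      · have : (1/2:ℝ) ^ e ≤ κ ^ e := Real.rpow_le_rpow (by norm_num) hκ0 hee
        exact (min_le_right _ _).trans this
      · have : (1:ℝ) ^ e ≤ κ ^ e :=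
          Real.rpow_le_rpow_of_nonpos hκpos hκ1.le hee
        rw [Real.one_rpow] at this
        exact (min_le_left _ _).trans this
    have hm2 : (2 * c) ^ (-d - 1) ≤ (1 - κ + κ * c) ^ (-d - 1) := by
      apply Real.rpow_le_rpow_of_nonpos hb ?_ (by linarith)
      have h1 : 1 - κ < c := by linarith [hκ.1]
      nlinarith [hκ1.le, hc.le]
    have hm3 : Real.exp (-t / 2) ≤ Real.exp (-κ * t / 2) :=
      Real.exp_le_exp.2 (by nlinarith)
    calc L = m * (2 * c) ^ (-d - 1) * Real.exp (-t / 2) := rfl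
      _ ≤ κ ^ e * (1 - κ + κ * c) ^ (-d - 1) * Real.exp (-κ * t / 2) := by
          apply mul_le_mul (mul_le_mul hm1 hm2
            (Real.rpow_nonneg (by linarith) _) (Real.rpow_nonneg hκpos.le _))
            hm3 (Real.exp_pos _).le
          exact mul_nonneg (Real.rpow_nonneg hκpos.le _) (Real.rpow_nonneg hb.le _)
      _ = f κ := rfl
  have hvol : (volume (Ioo (1 - c) 1)).toReal = c := by
    rw [Real.volume_Ioo]
    rw [show (1:ℝ) - (1 - c) = c by ring, ENNReal.toReal_ofReal hc.le]
  have hDen_lb : L * c ≤ ∫ κ in Ioo (0:ℝ) 1, f κ := by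
    have h1 : L * c ≤ ∫ κ in Ioo (1 - c) 1, f κ := by
      have := setIntegral_ge_of_const_le (μ := volume) measurableSet_Ioo
        (by rw [Real.volume_Ioo]; exact ENNReal.ofReal_ne_top)
        hlow (hf_int.mono_set hsub)
      rw [measureReal_def, hvol, smul_eq_mul] at this
      linarith
    refine h1.trans ?_
    apply setIntegral_mono_set hf_int
    · refine (ae_restrict_iff' measurableSet_Ioo).2 (Filter.Eventually.of_forall ?_)
      exact fun κ hκ => hf_nonneg κ hκ
    · exact Filter.Eventually.of_forall (fun x hx => hsub hx)
  have hDen_pos : 0 < ∫ κ in Ioo (0:ℝ) 1, f κ :=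
    lt_of_lt_of_le (mul_pos hL_pos hc) hDen_lb
  -- conclusion
  rw [div_le_iff₀ hDen_pos]
  set K : ℝ := C₁ / X + 1 with hK_def
  have hK_pos : 0 < K := by positivity
  have hRHS : K * c ^ d * Real.exp (t / 2) * (L * c) = K * X := by
    have e1 : Real.exp (t / 2) * Real.exp (-t / 2) = 1 := by
      rw [← Real.exp_add, show t / 2 + -t / 2 = 0 by ring, Real.exp_zero]
    have e2 : c ^ d * c ^ (-d - 1) * c = 1 := by
      rw [← Real.rpow_add hc]
      rw [show d + (-d - 1) = -1 by ring]
      rw [show c ^ (-1:ℝ) * c = c ^ (-1:ℝ) * c ^ (1:ℝ) by rw [Real.rpow_one]]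
      rw [← Real.rpow_add hc]; norm_num
    have e3 : (2 * c) ^ (-d - 1) = (2:ℝ) ^ (-d - 1) * c ^ (-d - 1) :=
      Real.mul_rpow (by norm_num) hc.le
    calc K * c ^ d * Real.exp (t / 2) * (L * c)
        = K * (m * (2:ℝ) ^ (-d - 1)) * ((c ^ d * c ^ (-d - 1) * c) *
            (Real.exp (t / 2) * Real.exp (-t / 2))) := by
          rw [hL_def, e3]; ring
      _ = K * X := by rw [e1, e2, hX_def]; ring
  have hKX : C₁ ≤ K * X := by
    rw [hK_def, add_mul, one_mul, div_mul_cancel₀ _ hX_pos.ne']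
    linarith [hX_pos]
  calc (∫ κ in Ioo (0:ℝ) 1, (1 - κ) * f κ) ≤ C₁ := hNum_le
    _ ≤ K * X := hKX
    _ = K * c ^ d * Real.exp (t / 2) * (L * c) := hRHS.symm
    _ ≤ K * c ^ d * Real.exp (t / 2) * ∫ κ in Ioo (0:ℝ) 1, f κ := by
        apply mul_le_mul_of_nonneg_left hDen_lb
        positivity
end

section
/- Let 0 < d < 1, k ≥ 1, t ≥ 0, c ∈ (0,1), and fix 0 < ξ < 1 and 0 < δ < 1. Suppose κ ∈ (0,1) has density proportional to κ^{d+k/2−1}(1−κ+κc)^{−d−1} exp(−κt/2). Then E[κ·1{κ>ξ}] ≤ K c^{−d} exp(−ξ(1−δ)t/2) for a constant K depending only on d, k, ξ, δ. -/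
open MeasureTheory Set

lemma EIG_aux_int_rpow {p a : ℝ} (hp : -1 < p) (ha : 0 ≤ a) :
    IntegrableOn (fun κ : ℝ => κ ^ p) (Ioo 0 a) := by
  have h := intervalIntegral.intervalIntegrable_rpow' (a := 0) (b := a) hp
  rw [intervalIntegrable_iff] at h
  exact h.mono_set (by rw [uIoc_of_le ha]; exact Ioo_subset_Ioc_self)

lemma EIG_aux_val {p s : ℝ} (hp : -1 < p) (hs : 0 < s) :
    ∫ κ in Ioo (0:ℝ) s, κ ^ p = s ^ (p + 1) / (p + 1) := by
  rw [← integral_Ioc_eq_integral_Ioo, ← intervalIntegral.integral_of_le hs.le,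
      integral_rpow (Or.inl hp), Real.zero_rpow (by linarith), sub_zero]

lemma EIG_contB {d c : ℝ} (hc0 : 0 < c) (hc1 : c < 1) (ξ : ℝ) :
    ContinuousOn (fun κ : ℝ => (1 - κ + κ * c) ^ (-d - 1)) (Icc ξ 1) := by
  apply ContinuousOn.rpow_const
  · exact ((continuous_const.sub continuous_id).add
      (continuous_id.mul continuous_const)).continuousOn
  · intro κ hκ
    left
    have : 0 < 1 - κ + κ * c := by nlinarith [mul_nonneg (sub_nonneg.2 hκ.2) (sub_nonneg.2 hc1.le)]
    exact this.ne'

lemma EIG_aux_ftc {d c ξ : ℝ} (hd0 : 0 < d) (hd1 : d < 1)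
    (hc : c ∈ Ioo (0:ℝ) 1) (hξ : ξ ∈ Ioo (0:ℝ) 1) :
    ∫ κ in Ioo ξ 1, (1 - κ + κ * c) ^ (-d - 1) ≤ c ^ (-d) / d := by
  obtain ⟨hc0, hc1⟩ := hc
  obtain ⟨hξ0, hξ1⟩ := hξ
  have hbase : ∀ κ ∈ Icc ξ (1:ℝ), 0 < 1 - κ + κ * c := by
    intro κ hκ
    nlinarith [mul_nonneg (sub_nonneg.2 hκ.2) (sub_nonneg.2 hc1.le)]
  have hderiv : ∀ κ ∈ Icc ξ (1:ℝ),
      HasDerivAt (fun κ => (1 - κ + κ * c) ^ (-d) / (d * (1 - c)))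
        ((1 - κ + κ * c) ^ (-d - 1)) κ := by
    intro κ hκ
    have hb := hbase κ hκ
    have h1 : HasDerivAt (fun κ : ℝ => 1 - κ + κ * c) (c - 1) κ := by
      have := ((hasDerivAt_const κ (1:ℝ)).sub (hasDerivAt_id κ)).add
        ((hasDerivAt_id κ).mul_const c)
      exact this.congr_deriv (by ring)
    have h2 := (h1.rpow_const (p := -d) (Or.inl hb.ne')).div_const (d * (1 - c))
    have hne : d * (1 - c) ≠ 0 := (mul_pos hd0 (by linarith)).ne'
    refine h2.congr_deriv ?_
    rw [div_eq_iff hne]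
    ring
  have hcb := EIG_contB (d := d) hc0 hc1 ξ
  have key := intervalIntegral.integral_eq_sub_of_hasDerivAt
    (fun κ hκ => hderiv κ (by rwa [uIcc_of_le hξ1.le] at hκ))
    (hcb.intervalIntegrable_of_Icc hξ1.le)
  have hset : (∫ κ in Ioo ξ 1, (1 - κ + κ * c) ^ (-d - 1))
      = ∫ κ in ξ..1, (1 - κ + κ * c) ^ (-d - 1) := by
    rw [intervalIntegral.integral_of_le hξ1.le, integral_Ioc_eq_integral_Ioo]
  rw [hset, key]
  have e1 : (1:ℝ) - 1 + 1 * c = c := by ring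
  rw [e1]
  have hb1 : 1 - ξ + ξ * c ≤ 1 := by nlinarith
  have hb0 : 0 < 1 - ξ + ξ * c := hbase ξ ⟨le_rfl, hξ1.le⟩
  have h1b : (1:ℝ) ≤ (1 - ξ + ξ * c) ^ (-d) :=
    Real.one_le_rpow_of_pos_of_le_one_of_nonpos hb0 hb1 (by linarith)
  have hcd : c ^ (1 - d) ≤ 1 := Real.rpow_le_one hc0.le hc1.le (by linarith)
  have hc1d : c ^ (1 - d) = c * c ^ (-d) := by
    rw [show (1:ℝ) - d = 1 + -d by ring, Real.rpow_add hc0, Real.rpow_one]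
  have hkey : c * c ^ (-d) ≤ (1 - ξ + ξ * c) ^ (-d) := by
    rw [← hc1d]; exact hcd.trans h1b
  have hdc : 0 < d * (1 - c) := mul_pos hd0 (by linarith)
  rw [div_sub_div_same, div_le_div_iff₀ hdc hd0]
  nlinarith [hkey, hd0.le]

set_option maxHeartbeats 1000000 in
/-- Lemma 5: under the Exponential-Inverse-Gamma posterior,
`E[κ · 1{κ > ξ}] ≤ K c^{-d} exp(-ξ(1-δ)t/2)`. -/
theorem EIG_posterior_kappa_above_bound
    (d : ℝ) (k : ℕ) (ξ δ : ℝ) (hd0 : 0 < d) (hd1 : d < 1) (hk : 1 ≤ k)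
    (hξ : ξ ∈ Ioo (0:ℝ) 1) (hδ : δ ∈ Ioo (0:ℝ) 1) :
    ∃ K : ℝ, 0 < K ∧ ∀ c ∈ Ioo (0:ℝ) 1, ∀ t : ℝ, 0 ≤ t →
      (∫ κ in Ioo ξ 1,
          κ * (κ ^ (d + (k : ℝ) / 2 - 1) * (1 - κ + κ * c) ^ (-d - 1) *
            Real.exp (-κ * t / 2))) /
        (∫ κ in Ioo (0:ℝ) 1,
          κ ^ (d + (k : ℝ) / 2 - 1) * (1 - κ + κ * c) ^ (-d - 1) *
            Real.exp (-κ * t / 2))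
      ≤ K * c ^ (-d) * Real.exp (-ξ * (1 - δ) * t / 2) := by
  obtain ⟨hξ0, hξ1⟩ := hξ
  obtain ⟨hδ0, hδ1⟩ := hδ
  set p : ℝ := d + (k : ℝ) / 2 - 1 with hpdef
  have hk2 : (1:ℝ) ≤ (k:ℝ) := by exact_mod_cast hk
  have hp : -1 < p := by simp only [hpdef]; linarith
  have hp1 : 0 < p + 1 := by linarith
  set s : ℝ := ξ * δ with hsdef
  have hs0 : 0 < s := mul_pos hξ0 hδ0
  have hs1 : s < 1 := by nlinarith
  set C₁ : ℝ := s ^ (p + 1) / (p + 1) with hC₁def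
  have hC₁ : 0 < C₁ := div_pos (Real.rpow_pos_of_pos hs0 _) hp1
  set C₂ : ℝ := max 1 (ξ ^ p) with hC₂def
  have hC₂ : 0 < C₂ := lt_max_of_lt_left one_pos
  refine ⟨C₂ / (d * C₁), div_pos hC₂ (mul_pos hd0 hC₁), ?_⟩
  intro c hc t ht
  obtain ⟨hc0, hc1⟩ := hc
  have hbase : ∀ κ : ℝ, κ ∈ Ioo (0:ℝ) 1 → c ≤ 1 - κ + κ * c ∧ 1 - κ + κ * c ≤ 1 := by
    intro κ hκ
    constructor
    · nlinarith [hκ.2]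
    · nlinarith [hκ.1]
  set f : ℝ → ℝ := fun κ => κ ^ p * (1 - κ + κ * c) ^ (-d - 1) * Real.exp (-κ * t / 2)
    with hfdef
  have hfnn : ∀ κ : ℝ, κ ∈ Ioo (0:ℝ) 1 → 0 ≤ f κ := by
    intro κ hκ
    exact mul_nonneg (mul_nonneg (Real.rpow_nonneg hκ.1.le _)
      (Real.rpow_pos_of_pos (lt_of_lt_of_le hc0 (hbase κ hκ).1) _).le) (Real.exp_pos _).le
  -- integrability of f on Ioo 0 1
  have hfmeas : AEStronglyMeasurable f (volume.restrict (Ioo (0:ℝ) 1)) := by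
    have hcont : ContinuousOn f (Ioo 0 1) := by
      apply ContinuousOn.mul
      apply ContinuousOn.mul
      · exact ContinuousOn.rpow_const continuousOn_id (fun κ hκ => Or.inl hκ.1.ne')
      · exact ContinuousOn.rpow_const
          (((continuous_const.sub continuous_id).add
            (continuous_id.mul continuous_const)).continuousOn)
          (fun κ hκ => Or.inl (lt_of_lt_of_le hc0 (hbase κ hκ).1).ne')
      · exact (Real.continuous_exp.comp
          ((continuous_neg.mul continuous_const).div_const 2)).continuousOn
    exact hcont.aestronglyMeasurable measurableSet_Ioo
  have hfbound : ∀ κ : ℝ, κ ∈ Ioo (0:ℝ) 1 → f κ ≤ c ^ (-d - 1) * κ ^ p := by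
    intro κ hκ
    have hb := hbase κ hκ
    have h0 : (0:ℝ) < 1 - κ + κ * c := lt_of_lt_of_le hc0 hb.1
    have h1 : (1 - κ + κ * c) ^ (-d - 1) ≤ c ^ (-d - 1) :=
      Real.rpow_le_rpow_of_nonpos hc0 hb.1 (by linarith)
    have h2 : Real.exp (-κ * t / 2) ≤ 1 := by
      rw [Real.exp_le_one_iff]
      nlinarith [mul_nonneg hκ.1.le ht]
    calc κ ^ p * (1 - κ + κ * c) ^ (-d - 1) * Real.exp (-κ * t / 2)
        ≤ κ ^ p * c ^ (-d - 1) * 1 := by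
          apply mul_le_mul (mul_le_mul le_rfl h1 (Real.rpow_pos_of_pos h0 _).le
            (Real.rpow_nonneg hκ.1.le _)) h2 (Real.exp_pos _).le
          exact mul_nonneg (Real.rpow_nonneg hκ.1.le _) (Real.rpow_nonneg hc0.le _)
      _ = c ^ (-d - 1) * κ ^ p := by ring
  have hfint : IntegrableOn f (Ioo (0:ℝ) 1) := by
    have hg : IntegrableOn (fun κ : ℝ => c ^ (-d - 1) * κ ^ p) (Ioo 0 1) :=
      (EIG_aux_int_rpow hp zero_le_one).const_mul _
    refine Integrable.mono hg hfmeas ?_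
    rw [ae_restrict_iff' measurableSet_Ioo]
    refine ae_of_all _ fun κ hκ => ?_
    rw [Real.norm_eq_abs, Real.norm_eq_abs, abs_of_nonneg (hfnn κ hκ)]
    exact le_trans (hfbound κ hκ) (le_abs_self _)
  -- denominator lower bound
  have hD1 : (∫ κ in Ioo (0:ℝ) s, f κ) ≤ ∫ κ in Ioo (0:ℝ) 1, f κ :=
    setIntegral_mono_set hfint
      ((ae_restrict_iff' measurableSet_Ioo).2 (ae_of_all _ hfnn))
      (HasSubset.Subset.eventuallyLE (Ioo_subset_Ioo le_rfl hs1.le))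
  have hD2 : (∫ κ in Ioo (0:ℝ) s, Real.exp (-s * t / 2) * κ ^ p)
      ≤ ∫ κ in Ioo (0:ℝ) s, f κ := by
    apply setIntegral_mono_on
    · exact (EIG_aux_int_rpow hp hs0.le).const_mul _
    · exact hfint.mono_set (Ioo_subset_Ioo le_rfl hs1.le)
    · exact measurableSet_Ioo
    · intro κ hκ
      have hκ1 : κ ∈ Ioo (0:ℝ) 1 := ⟨hκ.1, hκ.2.trans hs1⟩
      have hb := hbase κ hκ1
      have h0 : (0:ℝ) < 1 - κ + κ * c := lt_of_lt_of_le hc0 hb.1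
      have h1 : (1:ℝ) ≤ (1 - κ + κ * c) ^ (-d - 1) :=
        Real.one_le_rpow_of_pos_of_le_one_of_nonpos h0 hb.2 (by linarith)
      have h2 : Real.exp (-s * t / 2) ≤ Real.exp (-κ * t / 2) := by
        apply Real.exp_le_exp.2
        nlinarith [mul_le_mul_of_nonneg_right hκ.2.le ht]
      calc Real.exp (-s * t / 2) * κ ^ p = κ ^ p * 1 * Real.exp (-s * t / 2) := by ring
        _ ≤ κ ^ p * (1 - κ + κ * c) ^ (-d - 1) * Real.exp (-κ * t / 2) := by
            apply mul_le_mul (mul_le_mul le_rfl h1 zero_le_one (Real.rpow_nonneg hκ1.1.le _))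
              h2 (Real.exp_pos _).le
            exact mul_nonneg (Real.rpow_nonneg hκ1.1.le _) (Real.rpow_pos_of_pos h0 _).le
  have hDval : (∫ κ in Ioo (0:ℝ) s, Real.exp (-s * t / 2) * κ ^ p)
      = Real.exp (-s * t / 2) * C₁ := by
    rw [integral_const_mul, EIG_aux_val hp hs0]
  have hD : Real.exp (-s * t / 2) * C₁ ≤ ∫ κ in Ioo (0:ℝ) 1, f κ := by
    rw [← hDval]; exact hD2.trans hD1
  have hDpos : 0 < ∫ κ in Ioo (0:ℝ) 1, f κ :=
    lt_of_lt_of_le (mul_pos (Real.exp_pos _) hC₁) hD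
  -- numerator upper bound
  have hNbound : (∫ κ in Ioo ξ 1, κ * f κ)
      ≤ ∫ κ in Ioo ξ 1, (C₂ * Real.exp (-ξ * t / 2)) * (1 - κ + κ * c) ^ (-d - 1) := by
    apply setIntegral_mono_on
    · refine (ContinuousOn.integrableOn_Icc ?_).mono_set Ioo_subset_Icc_self
      apply ContinuousOn.mul continuousOn_id
      apply ContinuousOn.mul
      apply ContinuousOn.mul
      · exact ContinuousOn.rpow_const continuousOn_id
          (fun κ hκ => Or.inl (lt_of_lt_of_le hξ0 hκ.1).ne')
      · exact EIG_contB (d := d) hc0 hc1 ξ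
      · exact (Real.continuous_exp.comp
          ((continuous_neg.mul continuous_const).div_const 2)).continuousOn
    · exact (continuousOn_const.mul
        (EIG_contB (d := d) hc0 hc1 ξ)).integrableOn_Icc.mono_set Ioo_subset_Icc_self
    · exact measurableSet_Ioo
    · intro κ hκ
      have hκ0 : 0 < κ := lt_trans hξ0 hκ.1
      have hb : c ≤ 1 - κ + κ * c := by nlinarith [hκ.2.le, hκ.1.le]
      have h0 : (0:ℝ) < 1 - κ + κ * c := lt_of_lt_of_le hc0 hb
      have hκp : κ ^ p ≤ C₂ := by
        rcases le_or_gt 0 p with h | h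
        · exact le_trans (Real.rpow_le_one hκ0.le hκ.2.le h) (le_max_left _ _)
        · exact le_trans (Real.rpow_le_rpow_of_nonpos hξ0 hκ.1.le h.le) (le_max_right _ _)
      have hE : Real.exp (-κ * t / 2) ≤ Real.exp (-ξ * t / 2) := by
        apply Real.exp_le_exp.2
        nlinarith [mul_le_mul_of_nonneg_right hκ.1.le ht]
      calc κ * (κ ^ p * (1 - κ + κ * c) ^ (-d - 1) * Real.exp (-κ * t / 2))
          ≤ 1 * (C₂ * (1 - κ + κ * c) ^ (-d - 1) * Real.exp (-ξ * t / 2)) := by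
            apply mul_le_mul hκ.2.le
            · apply mul_le_mul (mul_le_mul hκp le_rfl (Real.rpow_pos_of_pos h0 _).le hC₂.le)
                hE (Real.exp_pos _).le
              exact mul_nonneg hC₂.le (Real.rpow_pos_of_pos h0 _).le
            · exact mul_nonneg (mul_nonneg (Real.rpow_nonneg hκ0.le _)
                (Real.rpow_pos_of_pos h0 _).le) (Real.exp_pos _).le
            · exact zero_le_one
        _ = (C₂ * Real.exp (-ξ * t / 2)) * (1 - κ + κ * c) ^ (-d - 1) := by ring
  have hN : (∫ κ in Ioo ξ 1, κ * f κ)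
      ≤ C₂ * Real.exp (-ξ * t / 2) * (c ^ (-d) / d) := by
    refine hNbound.trans ?_
    rw [integral_const_mul]
    exact mul_le_mul_of_nonneg_left (EIG_aux_ftc hd0 hd1 ⟨hc0, hc1⟩ ⟨hξ0, hξ1⟩)
      (mul_nonneg hC₂.le (Real.exp_pos _).le)
  -- conclusion
  have final : (∫ κ in Ioo ξ 1, κ * f κ) / (∫ κ in Ioo (0:ℝ) 1, f κ)
      ≤ C₂ / (d * C₁) * c ^ (-d) * Real.exp (-ξ * (1 - δ) * t / 2) := by
    rw [div_le_iff₀ hDpos]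
    have hexp : Real.exp (-ξ * (1 - δ) * t / 2) * Real.exp (-s * t / 2)
        = Real.exp (-ξ * t / 2) := by
      rw [← Real.exp_add]
      congr 1
      simp only [hsdef]
      ring
    calc (∫ κ in Ioo ξ 1, κ * f κ) ≤ C₂ * Real.exp (-ξ * t / 2) * (c ^ (-d) / d) := hN
      _ = (C₂ / (d * C₁) * c ^ (-d) * Real.exp (-ξ * (1 - δ) * t / 2))
            * (Real.exp (-s * t / 2) * C₁) := by
          rw [show (C₂ / (d * C₁) * c ^ (-d) * Real.exp (-ξ * (1 - δ) * t / 2))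
              * (Real.exp (-s * t / 2) * C₁)
              = C₂ / (d * C₁) * C₁ * c ^ (-d)
                * (Real.exp (-ξ * (1 - δ) * t / 2) * Real.exp (-s * t / 2)) by ring, hexp]
          field_simp
      _ ≤ (C₂ / (d * C₁) * c ^ (-d) * Real.exp (-ξ * (1 - δ) * t / 2))
            * ∫ κ in Ioo (0:ℝ) 1, f κ := by
          apply mul_le_mul_of_nonneg_left hD
          exact mul_nonneg (mul_nonneg (div_nonneg hC₂.le (mul_pos hd0 hC₁).le)
            (Real.rpow_nonneg hc0.le _)) (Real.exp_pos _).le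
  simpa only [hfdef] using final
end

section
/- Let 0 < d < 1, k ≥ 1, t > 0, c ∈ (0,1), and 0 < ξ < 1. Suppose κ ∈ (0,1) has density proportional to κ^{d+k/2−1}(1−κ+κc)^{−d−1} exp(−κt/2). Then E[κ·1{κ≤ξ}] ≤ K/t, with K depending only on d, k, ξ (e.g. K = (d+k/2)·2·(1−ξ)^{−d−1}(1+ξ)^{d+1}). -/
open MeasureTheory Set
open intervalIntegral

lemma helper1 {p b t : ℝ} (hp : -1 < p) (hb : 0 < b) (ht : 0 ≤ t) :
    IntegrableOn (fun κ : ℝ => κ ^ p * Real.exp (-κ * t / 2)) (Ioc 0 b) := by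
  have hrp : IntegrableOn (fun x : ℝ => x ^ p) (Ioc 0 b) :=
    ((intervalIntegral.integrableOn_Ioo_rpow_iff hb).2 hp).congr_set_ae Ioo_ae_eq_Ioc.symm
  refine hrp.integrable.mono' ?_ ?_
  · have : Measurable fun κ : ℝ => κ ^ p * Real.exp (-κ * t / 2) := by fun_prop
    exact this.aestronglyMeasurable
  · filter_upwards [ae_restrict_mem measurableSet_Ioc] with x hx
    have h1 : Real.exp (-x * t / 2) ≤ 1 := by
      apply Real.exp_le_one_iff.2; nlinarith [hx.1.le]
    have h2 : 0 ≤ x ^ p := Real.rpow_nonneg hx.1.le p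
    rw [Real.norm_eq_abs, abs_mul, abs_of_nonneg h2, abs_of_pos (Real.exp_pos _)]
    nlinarith [Real.exp_pos (-x * t / 2)]

lemma helper2 {p b : ℝ} (hp : -1 < p) (hb : 0 ≤ b) :
    ∫ x in Ioc (0:ℝ) b, x ^ p = b ^ (p + 1) / (p + 1) := by
  rw [← intervalIntegral.integral_of_le hb, integral_rpow (Or.inl hp),
    Real.zero_rpow (by linarith), sub_zero]

lemma helper3 {q t : ℝ} (hq : 0 < q) (ht : 0 < t) :
    IntegrableOn (fun κ : ℝ => κ ^ q * Real.exp (-κ * t / 2)) (Ioi 0) := by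
  have ht2 : 0 < t / 2 := by linarith
  have h0 : IntegrableOn (fun x : ℝ => Real.exp (-x) * x ^ (q + 1 - 1)) (Ioi 0) :=
    Real.GammaIntegral_convergent (by linarith)
  have h1 : IntegrableOn (fun x : ℝ => Real.exp (-(t/2*x)) * (t/2*x) ^ (q + 1 - 1))
      (Ioi 0) := by
    have := (integrableOn_Ioi_comp_mul_left_iff
      (fun x : ℝ => Real.exp (-x) * x ^ (q + 1 - 1)) 0 ht2).2 (by simpa using h0)
    simpa using this
  have h2 := h1.integrable.const_mul ((2/t) ^ q)
  refine h2.congr ?_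
  filter_upwards [ae_restrict_mem measurableSet_Ioi] with x hx
  have hx0 : (0:ℝ) < x := hx
  rw [add_sub_cancel_right, Real.mul_rpow ht2.le hx0.le]
  have : (2/t) ^ q * (t/2) ^ q = 1 := by
    rw [← Real.mul_rpow (by positivity) ht2.le]
    rw [div_mul_div_comm, show 2*t/(t*2) = 1 by field_simp, Real.one_rpow]
  have harg : -(t/2*x) = -x * t / 2 := by ring
  rw [harg]
  linear_combination Real.exp (-x * t / 2) * x ^ q * this

lemma helper4 {q t : ℝ} (hq : 0 < q) (ht : 0 < t) :
    ∫ κ in Ioi (0:ℝ), κ ^ q * Real.exp (-κ * t / 2)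
      = (2/t) ^ (q+1) * Real.Gamma (q+1) := by
  have ht2 : 0 < t / 2 := by linarith
  have := Real.integral_rpow_mul_exp_neg_mul_Ioi (a := q + 1) (r := t/2)
    (by linarith) ht2
  rw [show (1 : ℝ) / (t/2) = 2/t by field_simp] at this
  rw [← this]
  refine setIntegral_congr_fun measurableSet_Ioi fun x hx => ?_
  rw [add_sub_cancel_right]
  congr 1
  ring_nf

lemma key {a ξ t : ℝ} (ha : 0 < a) (hξ0 : 0 < ξ) (hξ1 : ξ < 1) (ht : 0 < t) :
    ∫ κ in Ioc (0:ℝ) ξ, κ ^ a * Real.exp (-κ * t / 2)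
      ≤ ((2 * max 1 (Real.Gamma (a+1) * Real.exp 1 * a)) / t) *
        ∫ κ in Ioc (0:ℝ) ξ, κ ^ (a-1) * Real.exp (-κ * t / 2) := by
  set C2 : ℝ := 2 * max 1 (Real.Gamma (a+1) * Real.exp 1 * a) with hC2
  have hC2ge : 2 ≤ C2 := by
    have := le_max_left 1 (Real.Gamma (a+1) * Real.exp 1 * a); nlinarith
  have hint1 : IntegrableOn (fun κ : ℝ => κ ^ a * Real.exp (-κ * t / 2)) (Ioc 0 ξ) :=
    helper1 (by linarith) hξ0 ht.le
  have hint2 : IntegrableOn (fun κ : ℝ => κ ^ (a-1) * Real.exp (-κ * t / 2)) (Ioc 0 ξ) :=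
    helper1 (by linarith) hξ0 ht.le
  have hD0 : 0 ≤ ∫ κ in Ioc (0:ℝ) ξ, κ ^ (a-1) * Real.exp (-κ * t / 2) := by
    apply setIntegral_nonneg measurableSet_Ioc
    intro x hx; exact mul_nonneg (Real.rpow_nonneg hx.1.le _) (Real.exp_pos _).le
  rcases le_or_gt (ξ * t) 2 with hcase | hcase
  · -- small t : pointwise κ ≤ ξ ≤ 2/t
    have step : ∫ κ in Ioc (0:ℝ) ξ, κ ^ a * Real.exp (-κ * t / 2)
        ≤ ∫ κ in Ioc (0:ℝ) ξ, (2/t) * (κ ^ (a-1) * Real.exp (-κ * t / 2)) := by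
      apply setIntegral_mono_on hint1 (hint2.const_mul _) measurableSet_Ioc
      intro x hx
      have hx0 := hx.1
      have hxt : x * t ≤ 2 := by nlinarith [hx.2]
      have hsplit : x ^ a = x * x ^ (a-1) := by
        rw [show x * x ^ (a-1) = x ^ (1:ℝ) * x ^ (a-1) by rw [Real.rpow_one],
          ← Real.rpow_add hx0]
        norm_num
      rw [hsplit]
      have h1 : x ≤ 2 / t := by rw [le_div_iff₀ ht]; linarith
      have h2 := mul_nonneg (sub_nonneg.2 h1)
        (mul_nonneg (Real.rpow_nonneg hx0.le (a-1)) (Real.exp_pos (-x * t / 2)).le)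
      nlinarith
    rw [MeasureTheory.integral_const_mul] at step
    refine step.trans ?_
    apply mul_le_mul_of_nonneg_right _ hD0
    gcongr
  · -- large t
    have h2t : 0 < 2/t := by positivity
    have h2tξ : 2/t ≤ ξ := by rw [div_le_iff₀ ht]; nlinarith
    have hG : 0 < Real.Gamma (a+1) := Real.Gamma_pos_of_pos (by linarith)
    have hP : 0 < (2/t) ^ a := Real.rpow_pos_of_pos h2t a
    have hE : 0 < Real.exp 1 := Real.exp_pos 1
    have hN : ∫ κ in Ioc (0:ℝ) ξ, κ ^ a * Real.exp (-κ * t / 2)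
        ≤ (2/t) ^ (a+1) * Real.Gamma (a+1) := by
      rw [← helper4 ha ht]
      apply setIntegral_mono_set (helper3 ha ht)
      · filter_upwards [ae_restrict_mem measurableSet_Ioi] with x hx
        exact mul_nonneg (Real.rpow_nonneg (le_of_lt hx) _) (Real.exp_pos _).le
      · exact (Ioc_subset_Ioi_self).eventuallyLE
    have hint3 : IntegrableOn (fun κ : ℝ => κ ^ (a-1) * Real.exp (-κ * t / 2))
        (Ioc 0 (2/t)) := helper1 (by linarith) h2t ht.le
    have hD1 : ∫ κ in Ioc (0:ℝ) (2/t), κ ^ (a-1) * Real.exp (-κ * t / 2)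
        ≤ ∫ κ in Ioc (0:ℝ) ξ, κ ^ (a-1) * Real.exp (-κ * t / 2) := by
      apply setIntegral_mono_set hint2
      · filter_upwards [ae_restrict_mem measurableSet_Ioc] with x hx
        exact mul_nonneg (Real.rpow_nonneg hx.1.le _) (Real.exp_pos _).le
      · exact (Ioc_subset_Ioc_right h2tξ).eventuallyLE
    have hD2 : (Real.exp 1)⁻¹ * ((2/t) ^ a / a)
        ≤ ∫ κ in Ioc (0:ℝ) (2/t), κ ^ (a-1) * Real.exp (-κ * t / 2) := by
      have hrp : IntegrableOn (fun x : ℝ => x ^ (a-1)) (Ioc 0 (2/t)) :=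
        ((intervalIntegral.integrableOn_Ioo_rpow_iff h2t).2 (by linarith)).congr_set_ae
          Ioo_ae_eq_Ioc.symm
      have hmono : ∫ κ in Ioc (0:ℝ) (2/t), (Real.exp 1)⁻¹ * κ ^ (a-1)
          ≤ ∫ κ in Ioc (0:ℝ) (2/t), κ ^ (a-1) * Real.exp (-κ * t / 2) := by
        apply setIntegral_mono_on (hrp.const_mul _) hint3 measurableSet_Ioc
        intro x hx
        have hx0 := hx.1
        have hxt : x * t ≤ 2 := by
          have := hx.2; rw [le_div_iff₀ ht] at this; linarith
        have hexp : (Real.exp 1)⁻¹ ≤ Real.exp (-x * t / 2) := by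
          rw [← Real.exp_neg]
          apply Real.exp_le_exp.2; nlinarith
        have := Real.rpow_nonneg hx0.le (a-1)
        nlinarith
      rw [MeasureTheory.integral_const_mul, helper2 (by linarith) h2t.le, sub_add_cancel] at hmono
      exact hmono
    have hC2' : 2 * (Real.Gamma (a+1) * Real.exp 1 * a) ≤ C2 := by
      have := le_max_right (1:ℝ) (Real.Gamma (a+1) * Real.exp 1 * a); nlinarith
    have heq : (2 * (Real.Gamma (a+1) * Real.exp 1 * a))/t *
        ((Real.exp 1)⁻¹ * ((2/t) ^ a / a)) = (2/t) ^ (a+1) * Real.Gamma (a+1) := by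
      rw [Real.rpow_add h2t, Real.rpow_one]
      field_simp
    calc ∫ κ in Ioc (0:ℝ) ξ, κ ^ a * Real.exp (-κ * t / 2)
        ≤ (2/t) ^ (a+1) * Real.Gamma (a+1) := hN
      _ = (2 * (Real.Gamma (a+1) * Real.exp 1 * a))/t *
            ((Real.exp 1)⁻¹ * ((2/t) ^ a / a)) := heq.symm
      _ ≤ C2/t * ((Real.exp 1)⁻¹ * ((2/t) ^ a / a)) := by
            apply mul_le_mul_of_nonneg_right _ (by positivity)
            gcongr
      _ ≤ C2/t * ∫ κ in Ioc (0:ℝ) (2/t), κ ^ (a-1) * Real.exp (-κ * t / 2) := by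
            apply mul_le_mul_of_nonneg_left hD2 (by positivity)
      _ ≤ C2/t * ∫ κ in Ioc (0:ℝ) ξ, κ ^ (a-1) * Real.exp (-κ * t / 2) := by
            apply mul_le_mul_of_nonneg_left hD1 (by positivity)


set_option maxHeartbeats 2000000 in
/-- Lemma 6: under the Exponential-Inverse-Gamma posterior,
`E[κ · 1{κ ≤ ξ}] ≤ K / t` with `K` depending only on `d, k, ξ`. -/
theorem EIG_posterior_kappa_below_bound
    (d : ℝ) (k : ℕ) (ξ : ℝ) (hd0 : 0 < d) (hd1 : d < 1) (hk : 1 ≤ k)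
    (hξ : ξ ∈ Ioo (0:ℝ) 1) :
    ∃ K : ℝ, 0 < K ∧ ∀ c ∈ Ioo (0:ℝ) 1, ∀ t : ℝ, 0 < t →
      (∫ κ in Ioc (0:ℝ) ξ,
          κ * (κ ^ (d + (k : ℝ) / 2 - 1) * (1 - κ + κ * c) ^ (-d - 1) *
            Real.exp (-κ * t / 2))) /
        (∫ κ in Ioo (0:ℝ) 1,
          κ ^ (d + (k : ℝ) / 2 - 1) * (1 - κ + κ * c) ^ (-d - 1) *
            Real.exp (-κ * t / 2))
      ≤ K / t := by
  obtain ⟨hξ0, hξ1⟩ := hξ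
  set a : ℝ := d + (k : ℝ) / 2 with ha_def
  have hk1 : (1:ℝ) ≤ (k:ℝ) := by exact_mod_cast hk
  have ha : 0 < a := by rw [ha_def]; linarith
  have hap : (-1:ℝ) < a - 1 := by linarith
  have hae : d + (k : ℝ) / 2 - 1 = a - 1 := by rw [ha_def]
  set C1 : ℝ := (1 - ξ) ^ (-d - 1) with hC1_def
  have hC1 : 0 < C1 := Real.rpow_pos_of_pos (by linarith) _
  set C2 : ℝ := 2 * max 1 (Real.Gamma (a+1) * Real.exp 1 * a) with hC2_def
  have hC2 : 0 < C2 := by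
    have := le_max_left (1:ℝ) (Real.Gamma (a+1) * Real.exp 1 * a); nlinarith
  refine ⟨C1 * C2, by positivity, ?_⟩
  rintro c ⟨hc0, hc1⟩ t ht
  rw [hae]
  set g : ℝ → ℝ := fun κ => (1 - κ + κ * c) ^ (-d - 1) with hg_def
  set e : ℝ → ℝ := fun κ => Real.exp (-κ * t / 2) with he_def
  -- basic bounds on g
  have hbase : ∀ κ : ℝ, κ ∈ Ioo (0:ℝ) 1 → c < 1 - κ + κ * c ∧ 1 - κ + κ * c ≤ 1 := by
    intro κ hκ
    constructor <;> nlinarith [hκ.1, hκ.2]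
  have hg_le_M : ∀ κ ∈ Ioo (0:ℝ) 1, g κ ≤ c ^ (-d - 1) := by
    intro κ hκ
    exact Real.rpow_le_rpow_of_nonpos hc0 (hbase κ hκ).1.le (by linarith)
  have hg_ge_one : ∀ κ ∈ Ioo (0:ℝ) 1, 1 ≤ g κ := by
    intro κ hκ
    have h := Real.rpow_le_rpow_of_nonpos (lt_trans hc0 (hbase κ hκ).1)
      (hbase κ hκ).2 (by linarith : -d - 1 ≤ 0)
    rwa [Real.one_rpow] at h
  have hg_le_C1 : ∀ κ ∈ Ioc (0:ℝ) ξ, g κ ≤ C1 := by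
    intro κ hκ
    apply Real.rpow_le_rpow_of_nonpos (by linarith) _ (by linarith : -d - 1 ≤ 0)
    nlinarith [hκ.1, hκ.2]
  have hg_pos : ∀ κ ∈ Ioo (0:ℝ) 1, 0 < g κ :=
    fun κ hκ => lt_of_lt_of_le one_pos (hg_ge_one κ hκ)
  have hIocIoo : Ioc (0:ℝ) ξ ⊆ Ioo (0:ℝ) 1 := fun x hx => ⟨hx.1, lt_of_le_of_lt hx.2 hξ1⟩
  -- integrability of the full denominator integrand on Ioo 0 1
  have hIden : IntegrableOn (fun κ : ℝ => κ ^ (a-1) * g κ * e κ) (Ioo 0 1) := by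
    have hrp : IntegrableOn (fun x : ℝ => c ^ (-d-1) * x ^ (a-1)) (Ioo (0:ℝ) 1) :=
      ((intervalIntegral.integrableOn_Ioo_rpow_iff one_pos).2 hap).const_mul _
    refine hrp.integrable.mono' ?_ ?_
    · have : Measurable (fun κ : ℝ => κ ^ (a-1) * (1 - κ + κ * c) ^ (-d - 1) *
          Real.exp (-κ * t / 2)) := by fun_prop
      exact this.aestronglyMeasurable
    · filter_upwards [ae_restrict_mem measurableSet_Ioo] with x hx
      have h1 : e x ≤ 1 := by
        rw [he_def]; apply Real.exp_le_one_iff.2; nlinarith [hx.1.le]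
      have h2 : 0 ≤ x ^ (a-1) := Real.rpow_nonneg hx.1.le _
      have h3 := hg_pos x hx
      have h4 := hg_le_M x hx
      have h5 : (0:ℝ) < e x := Real.exp_pos _
      rw [Real.norm_eq_abs,
        abs_of_nonneg (mul_nonneg (mul_nonneg h2 h3.le) h5.le)]
      have : x ^ (a-1) * g x ≤ x ^ (a-1) * c ^ (-d-1) := by nlinarith
      calc x ^ (a-1) * g x * e x ≤ x ^ (a-1) * g x * 1 := by
            nlinarith [mul_nonneg h2 h3.le]
        _ = x ^ (a-1) * g x := by ring
        _ ≤ x ^ (a-1) * c ^ (-d-1) := this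
        _ = c ^ (-d-1) * x ^ (a-1) := by ring
  -- integrability of the numerator integrand on Ioc 0 ξ
  have hInum : IntegrableOn (fun κ : ℝ => κ * (κ ^ (a-1) * g κ * e κ)) (Ioc 0 ξ) := by
    have hbig : IntegrableOn (fun κ : ℝ => C1 * (κ ^ a * e κ)) (Ioc 0 ξ) :=
      (helper1 (by linarith) hξ0 ht.le).const_mul _
    refine hbig.integrable.mono' ?_ ?_
    · have : Measurable (fun κ : ℝ => κ * (κ ^ (a-1) * (1 - κ + κ * c) ^ (-d - 1) *
          Real.exp (-κ * t / 2))) := by fun_prop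
      exact this.aestronglyMeasurable
    · filter_upwards [ae_restrict_mem measurableSet_Ioc] with x hx
      have hx0 := hx.1
      have h2 : 0 ≤ x ^ (a-1) := Real.rpow_nonneg hx0.le _
      have h3 := hg_pos x (hIocIoo hx)
      have h4 := hg_le_C1 x hx
      have h5 : (0:ℝ) < e x := Real.exp_pos _
      have hsplit : x ^ a = x * x ^ (a-1) := by
        rw [show x * x ^ (a-1) = x ^ (1:ℝ) * x ^ (a-1) by rw [Real.rpow_one],
          ← Real.rpow_add hx0]
        norm_num
      rw [Real.norm_eq_abs, abs_of_nonneg (mul_nonneg hx0.le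
        (mul_nonneg (mul_nonneg h2 h3.le) h5.le)), hsplit]
      nlinarith [mul_nonneg (sub_nonneg.2 h4)
        (mul_nonneg (mul_nonneg hx0.le h2) h5.le)]
  -- numerator ≤ C1 * N0
  have hNum : (∫ κ in Ioc (0:ℝ) ξ, κ * (κ ^ (a-1) * g κ * e κ))
      ≤ C1 * ∫ κ in Ioc (0:ℝ) ξ, κ ^ a * e κ := by
    rw [← MeasureTheory.integral_const_mul]
    apply setIntegral_mono_on hInum
      ((helper1 (by linarith) hξ0 ht.le).const_mul _) measurableSet_Ioc
    intro x hx
    have hx0 := hx.1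
    have h2 : 0 ≤ x ^ (a-1) := Real.rpow_nonneg hx0.le _
    have h4 := hg_le_C1 x hx
    have h5 : (0:ℝ) < e x := Real.exp_pos _
    have hsplit : x ^ a = x * x ^ (a-1) := by
      rw [show x * x ^ (a-1) = x ^ (1:ℝ) * x ^ (a-1) by rw [Real.rpow_one],
        ← Real.rpow_add hx0]
      norm_num
    rw [hsplit]
    nlinarith [mul_nonneg (sub_nonneg.2 h4)
      (mul_nonneg (mul_nonneg hx0.le h2) h5.le)]
  -- denominator ≥ D0
  have hDen : (∫ κ in Ioc (0:ℝ) ξ, κ ^ (a-1) * e κ)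
      ≤ ∫ κ in Ioo (0:ℝ) 1, κ ^ (a-1) * g κ * e κ := by
    have step1 : (∫ κ in Ioc (0:ℝ) ξ, κ ^ (a-1) * e κ)
        ≤ ∫ κ in Ioc (0:ℝ) ξ, κ ^ (a-1) * g κ * e κ := by
      apply setIntegral_mono_on (helper1 (by linarith) hξ0 ht.le)
        (hIden.mono_set hIocIoo) measurableSet_Ioc
      intro x hx
      have h2 : 0 ≤ x ^ (a-1) := Real.rpow_nonneg hx.1.le _
      have h3 := hg_ge_one x (hIocIoo hx)
      have h5 : (0:ℝ) < e x := Real.exp_pos _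
      nlinarith [mul_nonneg (sub_nonneg.2 h3) (mul_nonneg h2 h5.le)]
    refine step1.trans ?_
    apply setIntegral_mono_set hIden
    · filter_upwards [ae_restrict_mem measurableSet_Ioo] with x hx
      exact mul_nonneg (mul_nonneg (Real.rpow_nonneg hx.1.le _) (hg_pos x hx).le)
        (Real.exp_pos _).le
    · exact hIocIoo.eventuallyLE
  -- positivity of D0
  have hD0pos : 0 < ∫ κ in Ioc (0:ℝ) ξ, κ ^ (a-1) * e κ := by
    rw [setIntegral_pos_iff_support_of_nonneg_ae]
    · have hsub : Ioc (0:ℝ) ξ ⊆ Function.support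
          (fun κ : ℝ => κ ^ (a-1) * e κ) ∩ Ioc (0:ℝ) ξ := by
        intro x hx
        refine ⟨?_, hx⟩
        exact Function.mem_support.2
          (mul_pos (Real.rpow_pos_of_pos hx.1 _) (Real.exp_pos _)).ne'
      refine lt_of_lt_of_le ?_ (measure_mono hsub)
      rw [Real.volume_Ioc]
      simpa using ENNReal.ofReal_pos.2 hξ0
    · filter_upwards [ae_restrict_mem measurableSet_Ioc] with x hx
      exact mul_nonneg (Real.rpow_nonneg hx.1.le _) (Real.exp_pos _).le
    · exact helper1 (by linarith) hξ0 ht.le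
  have hDpos : 0 < ∫ κ in Ioo (0:ℝ) 1, κ ^ (a-1) * g κ * e κ :=
    lt_of_lt_of_le hD0pos hDen
  have hkey := key ha hξ0 hξ1 ht
  -- conclude
  rw [div_le_div_iff₀ hDpos ht]
  have hchain : (∫ κ in Ioc (0:ℝ) ξ, κ * (κ ^ (a-1) * g κ * e κ))
      ≤ C1 * (C2 / t * ∫ κ in Ioc (0:ℝ) ξ, κ ^ (a-1) * e κ) := by
    refine hNum.trans ?_
    exact mul_le_mul_of_nonneg_left hkey hC1.le
  calc (∫ κ in Ioc (0:ℝ) ξ, κ * (κ ^ (a-1) * g κ * e κ)) * t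
      ≤ (C1 * (C2 / t * ∫ κ in Ioc (0:ℝ) ξ, κ ^ (a-1) * e κ)) * t := by
        apply mul_le_mul_of_nonneg_right hchain ht.le
    _ = C1 * C2 * ∫ κ in Ioc (0:ℝ) ξ, κ ^ (a-1) * e κ := by
        field_simp
    _ ≤ C1 * C2 * ∫ κ in Ioo (0:ℝ) 1, κ ^ (a-1) * g κ * e κ := by
        apply mul_le_mul_of_nonneg_left hDen (by positivity)
end
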